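/- Let h⁻(z,w) = [[1, 0, 0], [(1+2z)/((−1+2z)w), 1, 0], [0, 0, 1]] and h⁺(z,w) = [[(1+z)w, −1/2 + z, 0], [(1+10z)/(2−4z), 0, 1], [0, 1, z⁻¹]] be 3×3 complex matrices. Then: (i) det h⁻(z,w) = 1 for all z, w ∈ ℂ with w ≠ 0 and z ≠ 1/2; (ii) det h⁺(z,w) = −(1+z)w + (1+10z)/(4z) for all z, w ∈ ℂ with z ≠ 0 and z ≠ 1/2; and (iii) det h⁺(z,w) ≠ 0 whenever |z| = 1 and |w| ≤ 1. In particular, h⁺(z,·) extends to an invertible-valued holomorphic function on the closed unit disk in w for each z on the unit circle. -/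

import Mathlib

open Complex Matrix

/-- The left factor `h⁻` of the Wiener–Hopf factorization in the `w`-variable. -/
noncomputable def hWHminus (z w : ℂ) : Matrix (Fin 3) (Fin 3) ℂ :=
  !![1, 0, 0;
     (1 + 2 * z) / ((-1 + 2 * z) * w), 1, 0;
     0, 0, 1]

/-- The right factor `h⁺` of the Wiener–Hopf factorization in the `w`-variable. -/
noncomputable def hWHplus (z w : ℂ) : Matrix (Fin 3) (Fin 3) ℂ :=
  !![(1 + z) * w, -1/2 + z, 0;
     (1 + 10 * z) / (2 - 4 * z), 0, 1;
     0, 1, z⁻¹]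

lemma hWHplus_det (z w : ℂ) (hz : z ≠ 0) (hz2 : z ≠ 1/2) :
    (hWHplus z w).det = -((1 + z) * w) + (1 + 10 * z) / (4 * z) := by
  have h24 : (2 : ℂ) - 4 * z ≠ 0 := by
    intro h
    apply hz2
    field_simp
    linear_combination -h/2
  simp [hWHplus, Matrix.det_fin_three]
  have h24' : (2 : ℂ) - z * 4 ≠ 0 := by rwa [mul_comm] at h24
  field_simp
  ring

/-- Invertibility of the Wiener–Hopf factors: `det h⁻ = 1`,
`det h⁺ = −(1+z)w + (1+10z)/(4z)`, and `det h⁺ ≠ 0` for `|z| = 1`, `|w| ≤ 1`. -/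
theorem hWH_factors_invertible :
    (∀ z w : ℂ, w ≠ 0 → z ≠ 1/2 → (hWHminus z w).det = 1) ∧
    (∀ z w : ℂ, z ≠ 0 → z ≠ 1/2 →
      (hWHplus z w).det = -((1 + z) * w) + (1 + 10 * z) / (4 * z)) ∧
    (∀ z w : ℂ, ‖z‖ = 1 → ‖w‖ ≤ 1 → (hWHplus z w).det ≠ 0) := by
  refine ⟨fun z w _ _ => by simp [hWHminus, Matrix.det_fin_three],
    fun z w hz hz2 => hWHplus_det z w hz hz2, fun z w hz hw hdet => ?_⟩
  have hz0 : z ≠ 0 := by intro h; rw [h] at hz; simp at hz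
  have hz2 : z ≠ 1/2 := by
    intro h; rw [h] at hz; norm_num at hz
  rw [hWHplus_det z w hz0 hz2] at hdet
  have heq : (1 + 10 * z) / (4 * z) = (1 + z) * w := by linear_combination hdet
  have h1 : ‖(1 + z) * w‖ ≤ 2 := by
    rw [norm_mul]
    calc ‖1 + z‖ * ‖w‖ ≤ (‖(1:ℂ)‖ + ‖z‖) * 1 := by
          exact mul_le_mul (norm_add_le _ _) hw (norm_nonneg _)
            (by positivity)
      _ = 2 := by rw [norm_one, hz]; norm_num
  have h10 : (9:ℝ) ≤ ‖1 + 10 * z‖ := by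
    have h := norm_add_le (1 + 10 * z) (-1)
    have e : 1 + 10 * z + -1 = (10:ℂ) * z := by ring
    rw [e] at h
    have : ‖(10:ℂ) * z‖ = 10 := by simp [norm_mul, hz]
    rw [this, norm_neg, norm_one] at h
    linarith
  have h2 : (9:ℝ)/4 ≤ ‖(1 + 10 * z) / (4 * z)‖ := by
    rw [norm_div, norm_mul]
    simp only [hz]
    have : ‖(4:ℂ)‖ = 4 := by norm_num
    rw [this]
    linarith [div_le_div_of_nonneg_right (c:=(4:ℝ)) h10 (by norm_num)]
  rw [heq] at h2
  linarith
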